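/- arXiv:2402.15629 — 2 statements merged into one kernel-verified Lean document; each statement's English description precedes it below -/
import Mathlib

section
/- Suppose there exist symmetric matrices X_{i,j} (i,j ∈ {1,…,n_M}, with X_{i,j} = X_{j,i}ᵀ) such that each X_{i,j} with j ≤ i is positive semidefinite and the block matrix with blocks (H_{i,j} − X_{i,j}) is positive semidefinite. Then for every σ ∈ ℝ^{n_M} with nonnegative entries, Σ_i σ_i² H_{i,i} + Σ_{i<j} σ_i σ_j (H_{i,j} + H_{j,i}) is positive semidefinite. -/
open Matrix Finset

variable {n : ℕ}

lemma trisplit {M : Type*} [AddCommMonoid M] (g : Fin n → M) (i : Fin n) :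
    ∑ j, g j = g i + ∑ j ∈ Finset.univ.filter (fun j => i < j), g j
      + ∑ j ∈ Finset.univ.filter (fun j => j < i), g j := by
  have : ∀ j : Fin n, g j =
      (if j = i then g j else 0) + (if i < j then g j else 0) + (if j < i then g j else 0) := by
    intro j
    rcases lt_trichotomy i j with h | h | h
    · simp [h, h.ne', not_lt_of_gt h]
    · simp [h]
    · simp [h, h.ne, not_lt_of_gt h]
  rw [Finset.sum_congr rfl fun j _ => this j]
  simp [Finset.sum_add_distrib, Finset.sum_ite_eq', Finset.sum_filter]

lemma sum_split {M : Type*} [AddCommMonoid M] (f : Fin n → Fin n → M) :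
    ∑ i, ∑ j, f i j = ∑ i, f i i
      + ∑ i, ∑ j ∈ Finset.univ.filter (fun j => i < j), (f i j + f j i) := by
  have h1 : ∑ i, ∑ j ∈ Finset.univ.filter (fun j => j < i), f i j
      = ∑ i, ∑ j ∈ Finset.univ.filter (fun j => i < j), f j i := by
    simp only [Finset.sum_filter]
    exact Finset.sum_comm
  calc ∑ i, ∑ j, f i j
      = ∑ i, (f i i + ∑ j ∈ Finset.univ.filter (fun j => i < j), f i j
        + ∑ j ∈ Finset.univ.filter (fun j => j < i), f i j) :=
        Finset.sum_congr rfl fun i _ => trisplit (f i) i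
    _ = ∑ i, f i i + ∑ i, ∑ j ∈ Finset.univ.filter (fun j => i < j), f i j
        + ∑ i, ∑ j ∈ Finset.univ.filter (fun j => j < i), f i j := by
        rw [Finset.sum_add_distrib, Finset.sum_add_distrib]
    _ = ∑ i, f i i + ∑ i, ∑ j ∈ Finset.univ.filter (fun j => i < j), (f i j + f j i) := by
        rw [h1, add_assoc, ← Finset.sum_add_distrib]
        simp [Finset.sum_add_distrib]

lemma psd_smul {k : ℕ} {A : Matrix (Fin k) (Fin k) ℝ} (hA : A.PosSemidef) {c : ℝ} (hc : 0 ≤ c) :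
    (c • A).PosSemidef := by
  refine ⟨?_, fun x => ?_⟩
  · unfold Matrix.IsHermitian
    rw [conjTranspose_smul, hA.1]
    simp
  · exact (hA.smul hc).2 x

theorem stmt1 {nM m : ℕ}
    (H X : Fin nM → Fin nM → Matrix (Fin m) (Fin m) ℝ)
    (hsym : ∀ i j, H i j = (H j i)ᵀ)
    (hXsym : ∀ i j, X i j = (X j i)ᵀ)
    (hXpsd : ∀ i j : Fin nM, j ≤ i → (X i j).PosSemidef)
    (hblk : (Matrix.of fun p q : Fin nM × Fin m =>
        (H p.1 q.1 - X p.1 q.1) p.2 q.2).PosSemidef) :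
    ∀ σ : Fin nM → ℝ, (∀ i, 0 ≤ σ i) →
      (∑ i, (σ i ^ 2) • H i i
        + ∑ i, ∑ j ∈ Finset.univ.filter (fun j => i < j),
            (σ i * σ j) • (H i j + H j i)).PosSemidef := by
  intro σ hσ
  have hrw : (∑ i, (σ i ^ 2) • H i i
        + ∑ i, ∑ j ∈ Finset.univ.filter (fun j => i < j),
            (σ i * σ j) • (H i j + H j i))
      = ∑ i, ∑ j, (σ i * σ j) • H i j := by
    rw [sum_split (fun i j => (σ i * σ j) • H i j)]
    congr 1
    · exact Finset.sum_congr rfl fun i _ => by rw [pow_two]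
    · refine Finset.sum_congr rfl fun i _ => Finset.sum_congr rfl fun j _ => ?_
      rw [smul_add, mul_comm (σ j) (σ i)]
  rw [hrw]
  have hsplit : (∑ i, ∑ j, (σ i * σ j) • H i j)
      = (∑ i, ∑ j, (σ i * σ j) • (H i j - X i j)) + ∑ i, ∑ j, (σ i * σ j) • X i j := by
    rw [← Finset.sum_add_distrib]
    refine Finset.sum_congr rfl fun i _ => ?_
    rw [← Finset.sum_add_distrib]
    exact Finset.sum_congr rfl fun j _ => by rw [← smul_add, sub_add_cancel]
  rw [hsplit]
  apply Matrix.PosSemidef.add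
  · set A : Matrix (Fin nM × Fin m) (Fin m) ℝ :=
      Matrix.of (fun p l => σ p.1 * (if p.2 = l then 1 else 0)) with hA
    have heq : (∑ i, ∑ j, (σ i * σ j) • (H i j - X i j))
        = Aᴴ * (Matrix.of fun p q : Fin nM × Fin m =>
            (H p.1 q.1 - X p.1 q.1) p.2 q.2) * A := by
      ext k l
      simp only [Matrix.sum_apply, Matrix.smul_apply, smul_eq_mul, Matrix.mul_apply,
        Matrix.conjTranspose_apply, Matrix.of_apply, star_trivial, hA,
        Fintype.sum_prod_type, mul_ite, ite_mul, mul_zero, zero_mul, mul_one, one_mul,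
        Finset.sum_ite_eq', Finset.mem_univ, if_true, Finset.sum_mul, Finset.mul_sum,
        Matrix.sub_apply]
      rw [Finset.sum_comm]
      refine Finset.sum_congr rfl fun i _ => Finset.sum_congr rfl fun j _ => ?_
      ring
    rw [heq]
    exact hblk.conjTranspose_mul_mul_same A
  · refine Finset.sum_induction _ _ (fun a b ha hb => ha.add hb) Matrix.PosSemidef.zero
      (fun i _ => ?_)
    refine Finset.sum_induction _ _ (fun a b ha hb => ha.add hb) Matrix.PosSemidef.zero
      (fun j _ => ?_)
    refine psd_smul ?_ (mul_nonneg (hσ i) (hσ j))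
    rcases le_total j i with h | h
    · exact hXpsd i j h
    · rw [hXsym i j]
      exact (hXpsd j i h).transpose
end

section
/- Let Q be symmetric positive definite, Y ∈ ℝ^{m×n}, and set K = Y Q⁻¹. For x̄ replaced by ū ∈ ℝ^m, a ∈ ℝ^m, b ∈ ℝ: if the block matrix [[(b − aᵀū)², aᵀY],[Yᵀ a, Q]] is positive semidefinite, then for every η with ηᵀQ⁻¹η ≤ 1, the input ū + Kη satisfies aᵀ(ū + Kη) ≤ b. -/
open Matrix

theorem stmt16 {n m : ℕ} (Q : Matrix (Fin n) (Fin n) ℝ) (hQ : Q.PosDef)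
    (Y : Matrix (Fin m) (Fin n) ℝ) (ubar a : Fin m → ℝ) (b : ℝ)
    (hb : 0 ≤ b - a ⬝ᵥ ubar)
    (hblk : (Matrix.fromBlocks
        (Matrix.of fun _ _ : Fin 1 => (b - a ⬝ᵥ ubar) ^ 2)
        (Matrix.of fun (_ : Fin 1) j => (a ᵥ* Y) j)
        (Matrix.of fun i (_ : Fin 1) => (Yᵀ *ᵥ a) i)
        Q).PosSemidef) :
    ∀ η : Fin n → ℝ, η ⬝ᵥ Q⁻¹ *ᵥ η ≤ 1 →
      a ⬝ᵥ (ubar + (Y * Q⁻¹) *ᵥ η) ≤ b := by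
  intro η hη
  have hdet : IsUnit Q.det := isUnit_iff_ne_zero.mpr hQ.det_pos.ne'
  set c : ℝ := b - a ⬝ᵥ ubar with hc
  set v : Fin n → ℝ := Q⁻¹ *ᵥ η with hv
  set s : ℝ := a ⬝ᵥ ((Y * Q⁻¹) *ᵥ η) with hs
  have hQv : Q *ᵥ v = η := by
    rw [hv, Matrix.mulVec_mulVec, Matrix.mul_nonsing_inv _ hdet, Matrix.one_mulVec]
  have hq : v ⬝ᵥ Q *ᵥ v ≤ 1 := by
    rw [hQv, dotProduct_comm]; exact hη
  have hsv : (a ᵥ* Y) ⬝ᵥ v = s := by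
    rw [hs, hv, ← Matrix.dotProduct_mulVec, Matrix.mulVec_mulVec]
  have hvs : v ⬝ᵥ ((Yᵀ *ᵥ a)) = s := by
    rw [dotProduct_comm, Matrix.mulVec_transpose]; exact hsv
  have key : ∀ t : ℝ, 0 ≤ c ^ 2 * (t * t) + (2 * s) * t + 1 := by
    intro t
    set A := Matrix.of fun _ _ : Fin 1 => c ^ 2 with hA
    set B := Matrix.of fun (_ : Fin 1) j => (a ᵥ* Y) j with hB
    set C := Matrix.of fun i (_ : Fin 1) => (Yᵀ *ᵥ a) i with hC
    have e1 : (fun (_ : Fin 1) => t) ⬝ᵥ (A *ᵥ fun _ => t) = c ^ 2 * (t * t) := by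
      simp [hA, Matrix.mulVec, dotProduct, Fin.sum_univ_one]; ring
    have e2 : (fun (_ : Fin 1) => t) ⬝ᵥ (B *ᵥ v) = t * s := by
      simp only [hB, Matrix.mulVec, dotProduct, Matrix.of_apply, Fin.sum_univ_one]
      rw [← hsv]; rfl
    have e3 : v ⬝ᵥ (C *ᵥ fun _ => t) = s * t := by
      have hCe : (C *ᵥ fun _ => t) = fun i => (Yᵀ *ᵥ a) i * t := by
        ext i; simp [hC, Matrix.mulVec, dotProduct, Fin.sum_univ_one]
      rw [hCe, ← hvs]
      simp [dotProduct, Finset.sum_mul, mul_assoc]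
    have hdot : Sum.elim (fun (_ : Fin 1) => t) v ⬝ᵥ
        (Matrix.fromBlocks A B C Q *ᵥ Sum.elim (fun _ => t) v)
        = c ^ 2 * (t * t) + (2 * s) * t + v ⬝ᵥ Q *ᵥ v := by
      rw [Matrix.fromBlocks_mulVec, Sum.elim_comp_inl, Sum.elim_comp_inr,
        sumElim_dotProduct_sumElim,
        dotProduct_add, dotProduct_add, e1, e2, e3]
      ring
    have h0 : (0:ℝ) ≤ c ^ 2 * (t * t) + (2 * s) * t + v ⬝ᵥ Q *ᵥ v := by
      have h := hblk.dotProduct_mulVec_nonneg (Sum.elim (fun _ => t) v)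
      rw [star_trivial, hdot] at h
      exact h
    linarith
  have hdisc := discrim_le_zero key
  rw [discrim] at hdisc
  have hs2 : s ^ 2 ≤ c ^ 2 := by nlinarith
  have hsc : s ≤ c := by nlinarith
  calc a ⬝ᵥ (ubar + (Y * Q⁻¹) *ᵥ η) = a ⬝ᵥ ubar + s := by
        rw [dotProduct_add, hs]
    _ ≤ a ⬝ᵥ ubar + c := by linarith
    _ = b := by rw [hc]; ring
end
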